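/- Points c₁, ..., c_{n+1} in ℂⁿ (n ≥ 1) are affinely dependent if and only if their Cayley–Menger determinant equals 0, i.e. the determinant of the (n+2)×(n+2) matrix M with M₀₀ = 0, M₀ⱼ = Mⱼ₀ = 1 for 1 ≤ j ≤ n+1, and Mᵢⱼ = φₙ(cᵢ, cⱼ) for 1 ≤ i, j ≤ n+1, equals 0. -/

import Mathlib

/-- `φₙ(x,y) = (x₁−y₁)² + ... + (xₙ−yₙ)²` for `x, y ∈ ℂⁿ`. -/
noncomputable def phiC (n : ℕ) (x y : Fin n → ℂ) : ℂ := ∑ i, (x i - y i) ^ 2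

/-- The Cayley–Menger matrix of `m` points in `ℂⁿ`: the `(m+1)×(m+1)` matrix `M` with
`M₀₀ = 0`, `M₀ⱼ = Mⱼ₀ = 1` for `1 ≤ j ≤ m`, and `Mᵢⱼ = φₙ(cᵢ, cⱼ)` for `1 ≤ i, j ≤ m`. -/
noncomputable def cayleyMenger (n m : ℕ) (c : Fin m → (Fin n → ℂ)) :
    Matrix (Fin (m + 1)) (Fin (m + 1)) ℂ :=
  Matrix.of (Fin.cases (Fin.cons 0 fun _ => 1)
    (fun i => Fin.cons 1 fun j => phiC n (c i) (c j)))

open Matrix Finset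

namespace CMaux

variable (n : ℕ) (c : Fin (n + 1) → (Fin n → ℂ))

noncomputable def Q (i : Fin (n + 1)) : ℂ := ∑ k, c i k ^ 2

noncomputable def Umat : Matrix (Fin (n + 2)) (Fin (n + 2)) ℂ :=
  Matrix.of (Fin.cases (Fin.cons 0 (Fin.cons 1 0))
    (fun i => Fin.cons 1 (Fin.cons (Q n c i) (fun k => -2 * c i k))))

noncomputable def Wmat : Matrix (Fin (n + 2)) (Fin (n + 2)) ℂ :=
  Matrix.of (Fin.cases (Fin.cons 1 (Fin.cons 0 0))
    (fun j => Fin.cons (Q n c j) (Fin.cons 1 (c j))))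

noncomputable def Amat : Matrix (Fin (n + 1)) (Fin (n + 1)) ℂ :=
  Matrix.of (fun i => (Fin.cons (1 : ℂ) (c i) : Fin (n + 1) → ℂ))

lemma factor : cayleyMenger n (n + 1) c = Umat n c * (Wmat n c)ᵀ := by
  ext i j
  rw [Matrix.mul_apply]
  induction i using Fin.cases with
  | zero =>
    induction j using Fin.cases with
    | zero =>
      simp [cayleyMenger, Umat, Wmat, Fin.sum_univ_succ]
    | succ j =>
      simp [cayleyMenger, Umat, Wmat, Fin.sum_univ_succ]
  | succ i =>
    induction j using Fin.cases with
    | zero =>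
      simp [cayleyMenger, Umat, Wmat, Fin.sum_univ_succ]
    | succ j =>
      simp only [cayleyMenger, Umat, Wmat, Matrix.of_apply, Matrix.transpose_apply,
        Fin.cases_succ, Fin.cons_succ, Fin.cons_zero, Fin.sum_univ_succ, phiC, Q]
      rw [Finset.sum_congr rfl (fun k _ => show (c i k - c j k) ^ 2
        = c i k ^ 2 + c j k ^ 2 + (-2 * c i k * c j k) by ring)]
      simp [Finset.sum_add_distrib]
      ring


lemma detW : (Wmat n c).det = (Amat n c).det := by
  rw [Matrix.det_succ_row_zero, Fin.sum_univ_succ]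
  have h0 : ∀ j : Fin (n + 1), Wmat n c 0 j.succ = 0 := by
    intro j
    induction j using Fin.cases <;> simp [Wmat, Fin.cons_succ]
  have h1 : Wmat n c 0 0 = 1 := by simp [Wmat]
  simp only [h0, h1, mul_zero, zero_mul, mul_zero, Finset.sum_const_zero, add_zero]
  have : (Wmat n c).submatrix Fin.succ ((0 : Fin (n + 2)).succAbove) = Amat n c := by
    ext i j
    simp [Wmat, Amat, Matrix.submatrix_apply, Fin.succAbove_zero, Fin.cons_succ]
  rw [this]
  simp

lemma detU : (Umat n c).det = -((-2) ^ n * (Amat n c).det) := by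
  rw [Matrix.det_succ_row_zero, Fin.sum_univ_succ, Fin.sum_univ_succ]
  have h0 : Umat n c 0 0 = 0 := by simp [Umat]
  have h1 : Umat n c 0 (Fin.succ 0) = 1 := by simp [Umat, Fin.cons_succ]
  have h2 : ∀ k : Fin n, Umat n c 0 (Fin.succ (Fin.succ k)) = 0 := by
    intro k
    simp [Umat, Fin.cons_succ]
  simp only [h0, h1, h2, mul_zero, zero_mul, mul_one, mul_zero, Finset.sum_const_zero,
    add_zero, zero_add]
  have hB : (Umat n c).submatrix Fin.succ ((Fin.succ 0 : Fin (n + 2)).succAbove)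
      = Amat n c * Matrix.diagonal (Fin.cons (1 : ℂ) (fun _ => -2)) := by
    ext i j
    rw [Matrix.mul_diagonal]
    induction j using Fin.cases with
    | zero =>
      have : (Fin.succ 0 : Fin (n + 2)).succAbove 0 = 0 := Fin.succ_succAbove_zero 0
      simp [Umat, Amat, Matrix.submatrix_apply, this, Fin.cons_succ]
    | succ k =>
      have : (Fin.succ 0 : Fin (n + 2)).succAbove k.succ
          = ((0 : Fin (n + 1)).succAbove k).succ := Fin.succ_succAbove_succ 0 k
      simp [Umat, Amat, Matrix.submatrix_apply, this, Fin.succAbove_zero, Fin.cons_succ]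
      ring
  rw [hB, Matrix.det_mul, Matrix.det_diagonal, Fin.prod_univ_succ]
  simp [Fin.cons_succ]
  ring

lemma detM : (cayleyMenger n (n + 1) c).det = -((-2) ^ n * (Amat n c).det ^ 2) := by
  rw [factor, Matrix.det_mul, Matrix.det_transpose, detU, detW]
  ring


lemma key (g : Fin (n + 1) → ℂ) :
    (∑ i, g i • Amat n c i) = Fin.cons (∑ i, g i) (∑ i, g i • c i) := by
  funext j
  induction j using Fin.cases with
  | zero => simp [Amat, Finset.sum_apply]
  | succ k => simp [Amat, Finset.sum_apply, Fin.cons_succ]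

lemma affineIndependent_iff_detA :
    AffineIndependent ℂ c ↔ (Amat n c).det ≠ 0 := by
  rw [← isUnit_iff_ne_zero, ← Matrix.isUnit_iff_isUnit_det,
    ← Matrix.linearIndependent_rows_iff_isUnit, Fintype.linearIndependent_iff,
    affineIndependent_iff_of_fintype]
  constructor
  · intro h g hg
    have hcons : Fin.cons (∑ i, g i) (∑ i, g i • c i)
        = (0 : Fin (n + 1) → ℂ) := by rw [← key]; exact hg
    have hsum : (∑ i, g i) = 0 := by
      have := congrFun hcons 0
      simpa using this
    have hlin : (∑ i, g i • c i) = 0 := by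
      funext k
      have := congrFun hcons (Fin.succ k)
      simpa [Fin.cons_succ] using this
    refine h g hsum ?_
    rw [Finset.weightedVSub_eq_linear_combination _ hsum, hlin]
  · intro h w hw hvs
    apply h w
    show ∑ i, w i • Amat n c i = 0
    rw [key]
    rw [Finset.weightedVSub_eq_linear_combination _ hw] at hvs
    rw [hw, hvs]
    funext j
    induction j using Fin.cases <;> simp [Fin.cons_succ]

end CMaux

theorem cayleyMenger_det_eq_zero_iff_not_affineIndependent
    (n : ℕ) (hn : 1 ≤ n) (c : Fin (n + 1) → (Fin n → ℂ)) :
    ¬ AffineIndependent ℂ c ↔ (cayleyMenger n (n + 1) c).det = 0 := by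
  rw [CMaux.affineIndependent_iff_detA, not_not, CMaux.detM]
  constructor
  · intro h; rw [h]; ring
  · intro h
    have h2 : ((-2 : ℂ)) ^ n ≠ 0 := pow_ne_zero _ (by norm_num)
    have : (CMaux.Amat n c).det ^ 2 = 0 := by
      rcases mul_eq_zero.mp (neg_eq_zero.mp h) with h' | h'
      · exact absurd h' h2
      · exact h'
    exact pow_eq_zero_iff (by norm_num) |>.mp this
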